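/- arXiv:2202.04163 — 3 statements merged into one kernel-verified Lean document; each statement's English description precedes it below -/
import Mathlib

section
/- Let a_1, ..., a_k ∈ F_2^n be linearly independent bit-strings and fix a qubit index j. Let M = exp(iπZ^{a_1}/8)···exp(iπZ^{a_k}/8) X_j exp(-iπZ^{a_1}/8)···exp(-iπZ^{a_k}/8), and write M = ∑_P m_P P over Pauli operators P ∈ {I,X,Y,Z}^{⊗n}. Then the number of P with m_P ≠ 0 equals 2^w, where w is the number of indices l with a_l(j) = 1. -/
open Complex Matrix
noncomputable section

/-- Single-qubit Pauli matrices I, X, Y, Z. -/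
def P1 : Fin 4 → Matrix (Fin 2) (Fin 2) ℂ
  | 0 => 1
  | 1 => !![0, 1; 1, 0]
  | 2 => !![0, -Complex.I; Complex.I, 0]
  | 3 => !![1, 0; 0, -1]

/-- n-qubit Pauli operator indexed by `v : Fin n → Fin 4` (tensor product of single-qubit Paulis). -/
def Pauli {n : ℕ} (v : Fin n → Fin 4) : Matrix (Fin n → Fin 2) (Fin n → Fin 2) ℂ :=
  fun x y => ∏ i, P1 (v i) (x i) (y i)

/-- A Clifford unitary: a unitary mapping every (Hermitian) Pauli to a signed Pauli by conjugation. -/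
def IsClifford {n : ℕ} (C : Matrix (Fin n → Fin 2) (Fin n → Fin 2) ℂ) : Prop :=
  C ∈ Matrix.unitaryGroup (Fin n → Fin 2) ℂ ∧
    ∀ v : Fin n → Fin 4, ∃ w : Fin n → Fin 4, ∃ ε : ℂ,
      (ε = 1 ∨ ε = -1) ∧ C * Pauli v * Cᴴ = ε • Pauli w

/-- exp(iπP/8) for a Pauli P. -/
def pexp {n : ℕ} (v : Fin n → Fin 4) : Matrix (Fin n → Fin 2) (Fin n → Fin 2) ℂ :=
  NormedSpace.exp ((Complex.I * (Real.pi / 8 : ℝ)) • Pauli v)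

/-- exp(-iπP/8) for a Pauli P. -/
def pexpNeg {n : ℕ} (v : Fin n → Fin 4) : Matrix (Fin n → Fin 2) (Fin n → Fin 2) ℂ :=
  NormedSpace.exp (-((Complex.I * (Real.pi / 8 : ℝ)) • Pauli v))

/-- Pauli X on qubit j. -/
def xAt {n : ℕ} (j : Fin n) : Fin n → Fin 4 := fun i => if i = j then 1 else 0

/-- Pauli Z on qubit j. -/
def zAt {n : ℕ} (j : Fin n) : Fin n → Fin 4 := fun i => if i = j then 3 else 0

/-- Z^a for a bit-string a given as booleans. -/
def zOf {n : ℕ} (a : Fin n → Bool) : Fin n → Fin 4 := fun i => if a i then 3 else 0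

/-- Z^a for a bit-string a ∈ F_2^n. -/
def zOfZ {n : ℕ} (a : Fin n → ZMod 2) : Fin n → Fin 4 := fun i => if a i = 1 then 3 else 0

/-- The tuple of Paulis pairwise commutes. -/
def PComm {n m : ℕ} (P : Fin m → Fin n → Fin 4) : Prop :=
  ∀ i j, Commute (Pauli (P i)) (Pauli (P j))

/-- Independence: no P_j equals a product of a subset of the others, up to sign. -/
def Indep {n m : ℕ} (P : Fin m → Fin n → Fin 4) : Prop :=
  ∀ j : Fin m, ∀ S : Finset (Fin m), j ∉ S → ∀ ε : ℂ, (ε = 1 ∨ ε = -1) →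
    Pauli (P j) ≠ ε • (S.toList.map (fun i => Pauli (P i))).prod

/-- The product exp(iπP₁/8)···exp(iπP_m/8). -/
def expProd {n m : ℕ} (P : Fin m → Fin n → Fin 4) :
    Matrix (Fin n → Fin 2) (Fin n → Fin 2) ℂ :=
  ((List.finRange m).map (fun j => pexp (P j))).prod

/-- Equality up to a global phase. -/
def PhaseEq {n : ℕ} (A B : Matrix (Fin n → Fin 2) (Fin n → Fin 2) ℂ) : Prop :=
  ∃ c : ℂ, ‖c‖ = 1 ∧ A = c • B

/-- The channel representation entry, as a complex number. -/
def chanC {n : ℕ} (U : Matrix (Fin n → Fin 2) (Fin n → Fin 2) ℂ)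
    (P Q : Fin n → Fin 4) : ℂ :=
  ((2 : ℂ) ^ n)⁻¹ * Matrix.trace (Pauli P * U * Pauli Q * Uᴴ)

/-- The channel representation: real 4^n × 4^n matrix. -/
def chan {n : ℕ} (U : Matrix (Fin n → Fin 2) (Fin n → Fin 2) ℂ) :
    Matrix (Fin n → Fin 4) (Fin n → Fin 4) ℝ :=
  fun P Q => (chanC U P Q).re

/-- All elements of a finite set of Paulis pairwise commute. -/
def SetComm {n : ℕ} (S : Finset (Fin n → Fin 4)) : Prop :=
  ∀ P ∈ S, ∀ Q ∈ S, Commute (Pauli P) (Pauli Q)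

/-- Independence for a finite set of Paulis: no element is a product of a subset
of the others, up to sign. -/
def SetIndep {n : ℕ} (S : Finset (Fin n → Fin 4)) : Prop :=
  ∀ P ∈ S, ∀ T ⊆ S.erase P, ∀ ε : ℂ, (ε = 1 ∨ ε = -1) →
    Pauli P ≠ ε • (T.toList.map Pauli).prod

/-- The layer T^{⊗k₁} ⊗ (T†)^{⊗k₂} ⊗ I^{⊗(n-k₁-k₂)}. -/
def TLayer (n k₁ k₂ : ℕ) : Matrix (Fin n → Fin 2) (Fin n → Fin 2) ℂ :=
  Matrix.diagonal (fun x => ∏ i : Fin n,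
    if x i = 1 then
      (if (i : ℕ) < k₁ then Complex.exp (Complex.I * (Real.pi / 4 : ℝ))
       else if (i : ℕ) < k₁ + k₂ then Complex.exp (-(Complex.I * (Real.pi / 4 : ℝ)))
       else 1)
    else 1)

/-- T-depth at most one: C₁ (T^{⊗k₁} ⊗ T†^{⊗k₂} ⊗ I) C₂ up to global phase. -/
def TDepthAtMostOne (n : ℕ) (U : Matrix (Fin n → Fin 2) (Fin n → Fin 2) ℂ) : Prop :=
  ∃ (k₁ k₂ : ℕ) (C₁ C₂ : Matrix (Fin n → Fin 2) (Fin n → Fin 2) ℂ) (c : ℂ),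
    k₁ + k₂ ≤ n ∧ IsClifford C₁ ∧ IsClifford C₂ ∧ ‖c‖ = 1 ∧
    U = c • (C₁ * TLayer n k₁ k₂ * C₂)

/-- T-depth exactly one: as above with at least one T gate. -/
def TDepthOne (n : ℕ) (U : Matrix (Fin n → Fin 2) (Fin n → Fin 2) ℂ) : Prop :=
  ∃ (k₁ k₂ : ℕ) (C₁ C₂ : Matrix (Fin n → Fin 2) (Fin n → Fin 2) ℂ) (c : ℂ),
    1 ≤ k₁ + k₂ ∧ k₁ + k₂ ≤ n ∧ IsClifford C₁ ∧ IsClifford C₂ ∧ ‖c‖ = 1 ∧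
    U = c • (C₁ * TLayer n k₁ k₂ * C₂)

namespace HW

def bit : Fin 2 → ZMod 2 := fun t => if t = 1 then 1 else 0

def emap : ZMod 2 → ℂ := fun t => if t = 1 then -1 else 1

lemma emap_zero : emap 0 = 1 := by simp [emap]

lemma emap_add (s t : ZMod 2) : emap (s + t) = emap s * emap t := by
  unfold emap
  split_ifs <;> simp_all <;> revert s t <;> decide

lemma emap_ne_zero (t : ZMod 2) : emap t ≠ 0 := by
  unfold emap; split_ifs <;> norm_num

lemma emap_sum {ι : Type*} [DecidableEq ι] (s : Finset ι) (f : ι → ZMod 2) :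
    emap (∑ i ∈ s, f i) = ∏ i ∈ s, emap (f i) := by
  induction s using Finset.induction_on with
  | empty => simp [emap_zero]
  | insert x s h ih => rw [Finset.sum_insert h, Finset.prod_insert h, emap_add, ih]

def sgn {n : ℕ} (b : Fin n → ZMod 2) (x : Fin n → Fin 2) : ℂ :=
  emap (∑ i, b i * bit (x i))

lemma sgn_prod {n : ℕ} (b : Fin n → ZMod 2) (x : Fin n → Fin 2) :
    sgn b x = ∏ i, emap (b i * bit (x i)) := emap_sum _ _

lemma sgn_add {n : ℕ} (b c : Fin n → ZMod 2) (x : Fin n → Fin 2) :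
    sgn (b + c) x = sgn b x * sgn c x := by
  unfold sgn
  rw [← emap_add, ← Finset.sum_add_distrib]
  congr 1; apply Finset.sum_congr rfl; intro i _; simp [add_mul]

lemma sgn_zero {n : ℕ} (x : Fin n → Fin 2) : sgn 0 x = 1 := by
  simp [sgn, emap_zero]

lemma sgn_ne_zero {n : ℕ} (b : Fin n → ZMod 2) (x : Fin n → Fin 2) : sgn b x ≠ 0 :=
  emap_ne_zero _

/-- Orthogonality of characters. -/
lemma sum_sgn {n : ℕ} (b : Fin n → ZMod 2) :
    ∑ x : Fin n → Fin 2, sgn b x = if b = 0 then (2 : ℂ) ^ n else 0 := by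
  have key : ∑ x : Fin n → Fin 2, sgn b x = ∏ i : Fin n, ∑ t : Fin 2, emap (b i * bit t) := by
    rw [Finset.prod_univ_sum]
    rw [← Fintype.piFinset_univ]
    apply Finset.sum_congr rfl
    intro x _; exact sgn_prod b x
  rw [key]
  by_cases hb : b = 0
  · subst hb
    simp [emap_zero]
  · obtain ⟨i, hi⟩ := Function.ne_iff.mp hb
    rw [if_neg hb]
    apply Finset.prod_eq_zero (Finset.mem_univ i)
    have hbi : b i = 1 := by
      have h2 : ∀ t : ZMod 2, t ≠ 0 → t = 1 := by decide
      exact h2 _ (by simpa using hi)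
    rw [hbi]
    have : ∑ t : Fin 2, emap (1 * bit t) = emap (bit 0) + emap (bit 1) := by
      rw [Fin.sum_univ_two]; simp
    rw [this]; simp [bit, emap]

end HW

namespace HW

variable {n : ℕ}

lemma fin2cases (t : Fin 2) : t = 0 ∨ t = 1 := by omega

lemma pauli_zOfZ (b : Fin n → ZMod 2) : Pauli (zOfZ b) = Matrix.diagonal (sgn b) := by
  ext x y
  by_cases hxy : x = y
  · subst hxy
    rw [Matrix.diagonal_apply_eq, sgn_prod]
    unfold Pauli zOfZ
    apply Finset.prod_congr rfl
    intro i _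
    by_cases hb : b i = 1
    · rw [if_pos hb, hb]
      rcases fin2cases (x i) with h | h <;> rw [h] <;> simp [P1, bit, emap]
    · have hb0 : b i = 0 := by
        have h2 : ∀ t : ZMod 2, t ≠ 1 → t = 0 := by decide
        exact h2 _ hb
      rw [if_neg hb, hb0]
      rcases fin2cases (x i) with h | h <;> rw [h] <;> simp [P1, bit, emap, Matrix.one_apply]
  · rw [Matrix.diagonal_apply_ne _ hxy]
    obtain ⟨i, hi⟩ := Function.ne_iff.mp hxy
    unfold Pauli
    apply Finset.prod_eq_zero (Finset.mem_univ i)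
    unfold zOfZ
    by_cases hb : b i = 1 <;> simp only [hb, if_true, if_false] <;>
      rcases fin2cases (x i) with h1 | h1 <;> rcases fin2cases (y i) with h2 | h2 <;>
      rw [h1, h2] <;> first
        | (exfalso; rw [h1, h2] at hi; exact hi rfl)
        | simp [P1, Matrix.one_apply]

lemma pexp_zOfZ (b : Fin n → ZMod 2) :
    pexp (zOfZ b) =
      Matrix.diagonal (fun x => Complex.exp ((Complex.I * (Real.pi / 8 : ℝ)) * sgn b x)) := by
  unfold pexp
  rw [pauli_zOfZ, ← Matrix.diagonal_smul, Matrix.exp_diagonal]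
  refine congrArg Matrix.diagonal (funext fun x => ?_)
  rw [Pi.coe_exp, Pi.smul_apply, smul_eq_mul, Complex.exp_eq_exp_ℂ]

lemma pexpNeg_zOfZ (b : Fin n → ZMod 2) :
    pexpNeg (zOfZ b) =
      Matrix.diagonal (fun x => Complex.exp (-((Complex.I * (Real.pi / 8 : ℝ)) * sgn b x))) := by
  unfold pexpNeg
  rw [pauli_zOfZ, ← Matrix.diagonal_smul, Matrix.diagonal_neg, Matrix.exp_diagonal]
  refine congrArg Matrix.diagonal (funext fun x => ?_)
  simp only [Pi.coe_exp, Pi.neg_apply, Pi.smul_apply, smul_eq_mul, Complex.exp_eq_exp_ℂ]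

lemma listProd_diagonal {α : Type*} (L : List α) (f : α → (Fin n → Fin 2) → ℂ) :
    (L.map (fun l => Matrix.diagonal (f l))).prod =
      Matrix.diagonal (fun x => (L.map (fun l => f l x)).prod) := by
  induction L with
  | nil => simp [Matrix.diagonal_one]
  | cons a L ih =>
      simp only [List.map_cons, List.prod_cons, ih, Matrix.diagonal_mul_diagonal]

end HW

namespace HW

variable {n : ℕ}

def flp (j : Fin n) (x : Fin n → Fin 2) : Fin n → Fin 2 := Function.update x j (x j + 1)

lemma bit_add_one (t : Fin 2) : bit (t + 1) = bit t + 1 := by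
  rcases fin2cases t with h | h <;> rw [h] <;> decide

lemma sgn_flp (j : Fin n) (b : Fin n → ZMod 2) (x : Fin n → Fin 2) :
    sgn b (flp j x) = emap (b j) * sgn b x := by
  unfold sgn flp
  rw [← emap_add]
  congr 1
  have h1 : ∀ i, b i * bit (Function.update x j (x j + 1) i) =
      b i * bit (x i) + (if i = j then b j else 0) := by
    intro i
    by_cases h : i = j
    · subst h; rw [Function.update_self, bit_add_one, mul_add, mul_one, if_pos rfl]
    · rw [Function.update_of_ne h, if_neg h, add_zero]
  rw [Finset.sum_congr rfl (fun i _ => h1 i), Finset.sum_add_distrib,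
    Finset.sum_ite_eq' Finset.univ j (fun _ => b j), if_pos (Finset.mem_univ j)]
  ring

lemma flp_flp (j : Fin n) (x : Fin n → Fin 2) : flp j (flp j x) = x := by
  funext i
  unfold flp
  by_cases h : i = j
  · subst h
    simp only [Function.update_self]
    rcases fin2cases (x i) with h1 | h1 <;> rw [h1] <;> decide
  · rw [Function.update_of_ne h, Function.update_of_ne h]

lemma pauli_xAt_apply (j : Fin n) (x y : Fin n → Fin 2) :
    Pauli (xAt j) x y = if y = flp j x then 1 else 0 := by
  unfold Pauli xAt flp
  by_cases h : y = Function.update x j (x j + 1)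
  · rw [if_pos h]; subst h
    apply Finset.prod_eq_one; intro i _
    by_cases hij : i = j
    · subst hij
      simp only [if_pos rfl, Function.update_self]
      rcases fin2cases (x i) with h1 | h1 <;> rw [h1] <;> simp [P1]
    · simp [Function.update_of_ne hij, if_neg hij, P1, Matrix.one_apply]
  · rw [if_neg h]
    obtain ⟨i, hi⟩ := Function.ne_iff.mp h
    apply Finset.prod_eq_zero (Finset.mem_univ i)
    by_cases hij : i = j
    · subst hij
      rw [Function.update_self] at hi
      have hxy : y i = x i := by
        have : ∀ s t : Fin 2, s ≠ t + 1 → s = t := by decide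
        exact this _ _ hi
      rw [if_pos rfl, hxy]
      rcases fin2cases (x i) with h1 | h1 <;> rw [h1] <;> simp [P1]
    · rw [Function.update_of_ne hij] at hi
      rw [if_neg hij]
      rcases fin2cases (x i) with h1 | h1 <;> rcases fin2cases (y i) with h2 | h2 <;>
        rw [h1, h2] <;> simp_all [P1, Matrix.one_apply]

lemma trace_ADXD (j : Fin n) (A : Matrix (Fin n → Fin 2) (Fin n → Fin 2) ℂ)
    (g₁ g₂ : (Fin n → Fin 2) → ℂ) :
    Matrix.trace (A * (Matrix.diagonal g₁ * Pauli (xAt j) * Matrix.diagonal g₂)) =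
      ∑ x : Fin n → Fin 2, A x (flp j x) * (g₁ (flp j x) * g₂ x) := by
  have hB : ∀ y x, (Matrix.diagonal g₁ * Pauli (xAt j) * Matrix.diagonal g₂) y x =
      (if y = flp j x then 1 else 0) * (g₁ y * g₂ x) := by
    intro y x
    rw [Matrix.mul_diagonal, Matrix.diagonal_mul, pauli_xAt_apply]
    have : (x = flp j y) = (y = flp j x) := by
      apply propext
      constructor
      · intro h; rw [h, flp_flp]
      · intro h; rw [h, flp_flp]
    simp only [this]
    ring
  rw [Matrix.trace]
  simp only [Matrix.diag_apply, Matrix.mul_apply, hB]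
  apply Finset.sum_congr rfl
  intro x _
  simp only [mul_ite, ite_mul, one_mul, zero_mul, mul_zero, mul_one]
  rw [Finset.sum_ite_eq' Finset.univ (flp j x)
    (fun y => A x y * (g₁ y * g₂ x)), if_pos (Finset.mem_univ _)]

end HW

namespace HW

variable {n k : ℕ}

def cc : ℂ := Complex.I * ((Real.pi / 8 : ℝ) : ℂ)

def rt2 : ℂ := ((Real.sqrt 2 / 2 : ℝ) : ℂ)

lemma sgn_cases (b : Fin n → ZMod 2) (x : Fin n → Fin 2) : sgn b x = 1 ∨ sgn b x = -1 := by
  unfold sgn emap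
  split <;> simp

lemma exp_neg_quarter (s : ℂ) (hs : s = 1 ∨ s = -1) :
    Complex.exp (-(2 * cc * s)) = rt2 * (1 + (-Complex.I) * s) := by
  have hpi : (0:ℝ) < Real.pi := Real.pi_pos
  rcases hs with h | h <;> subst h
  · have h1 : -(2 * cc * 1) = ((-(Real.pi / 4) : ℝ) : ℂ) * Complex.I := by
      unfold cc; push_cast; ring
    rw [h1, Complex.exp_mul_I, ← Complex.ofReal_cos, ← Complex.ofReal_sin,
      Real.cos_neg, Real.sin_neg, Real.cos_pi_div_four, Real.sin_pi_div_four]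
    unfold rt2; push_cast; ring
  · have h1 : -(2 * cc * (-1)) = (((Real.pi / 4) : ℝ) : ℂ) * Complex.I := by
      unfold cc; push_cast; ring
    rw [h1, Complex.exp_mul_I, ← Complex.ofReal_cos, ← Complex.ofReal_sin,
      Real.cos_pi_div_four, Real.sin_pi_div_four]
    unfold rt2; push_cast; ring

lemma exp_pair (b : Fin n → ZMod 2) (j : Fin n) (x : Fin n → Fin 2) :
    Complex.exp (cc * sgn b (flp j x)) * Complex.exp (-(cc * sgn b x)) =
      if b j = 1 then rt2 * (1 + (-Complex.I) * sgn b x) else 1 := by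
  rw [sgn_flp]
  by_cases hb : b j = 1
  · rw [if_pos hb, hb]
    have he : emap 1 = -1 := by simp [emap]
    rw [he, ← Complex.exp_add]
    have harg : cc * (-1 * sgn b x) + -(cc * sgn b x) = -(2 * cc * sgn b x) := by ring
    rw [harg]
    exact exp_neg_quarter _ (sgn_cases b x)
  · have hb0 : b j = 0 := by
      have h2 : ∀ t : ZMod 2, t ≠ 1 → t = 0 := by decide
      exact h2 _ hb
    rw [if_neg hb, hb0, emap_zero, ← Complex.exp_add]
    have harg : cc * (1 * sgn b x) + -(cc * sgn b x) = 0 := by ring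
    rw [harg, Complex.exp_zero]

lemma prod_sgn {ι : Type*} [DecidableEq ι] (S : Finset ι) (f : ι → Fin n → ZMod 2)
    (x : Fin n → Fin 2) : ∏ l ∈ S, sgn (f l) x = sgn (∑ l ∈ S, f l) x := by
  induction S using Finset.induction_on with
  | empty => simp [sgn_zero]
  | insert x S h ih => rw [Finset.prod_insert h, Finset.sum_insert h, sgn_add, ih]

def Wset (a : Fin k → Fin n → ZMod 2) (j : Fin n) : Finset (Fin k) :=
  Finset.univ.filter (fun l => a l j = 1)

lemma F_expand (a : Fin k → Fin n → ZMod 2) (j : Fin n) (x : Fin n → Fin 2) :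
    (∏ l, Complex.exp (cc * sgn (a l) (flp j x))) * (∏ l, Complex.exp (-(cc * sgn (a l) x))) =
    ∑ S ∈ (Wset a j).powerset,
      rt2 ^ (Wset a j).card * ((-Complex.I) ^ S.card * sgn (∑ l ∈ S, a l) x) := by
  rw [← Finset.prod_mul_distrib]
  rw [Finset.prod_congr rfl (fun l _ => exp_pair (a l) j x)]
  rw [← Finset.prod_filter (fun l => a l j = 1) (fun l => rt2 * (1 + (-Complex.I) * sgn (a l) x))]
  rw [Finset.prod_mul_distrib, Finset.prod_const]
  show rt2 ^ (Wset a j).card * ∏ l ∈ Wset a j, (1 + (-Complex.I) * sgn (a l) x) = _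
  have hcomm : ∀ l ∈ Wset a j,
      (1 + (-Complex.I) * sgn (a l) x) = ((-Complex.I) * sgn (a l) x + 1) := fun l _ => by ring
  rw [Finset.prod_congr rfl hcomm]
  rw [Finset.prod_add]
  rw [Finset.mul_sum]
  apply Finset.sum_congr rfl
  intro S hS
  rw [Finset.prod_const, Finset.prod_mul_distrib, Finset.prod_const, prod_sgn]
  ring

end HW

namespace HW

variable {n k : ℕ}

def Good (j : Fin n) (P : Fin n → Fin 4) : Prop :=
  (P j = 1 ∨ P j = 2) ∧ ∀ i, i ≠ j → (P i = 0 ∨ P i = 3)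

def bOf (j : Fin n) (P : Fin n → Fin 4) : Fin n → ZMod 2 :=
  fun i => if i = j then (if P j = 2 then 1 else 0) else (if P i = 3 then 1 else 0)

lemma fin4cases (t : Fin 4) : t = 0 ∨ t = 1 ∨ t = 2 ∨ t = 3 := by omega

lemma flp_apply_ne (j i : Fin n) (x : Fin n → Fin 2) (h : i ≠ j) : flp j x i = x i :=
  Function.update_of_ne h _ _

lemma flp_apply_eq (j : Fin n) (x : Fin n → Fin 2) : flp j x j = x j + 1 :=
  Function.update_self _ _ _

lemma pauli_bad (j : Fin n) (P : Fin n → Fin 4) (hP : ¬ Good j P) (x : Fin n → Fin 2) :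
    Pauli P x (flp j x) = 0 := by
  unfold Pauli
  by_cases hj : P j = 1 ∨ P j = 2
  · have hex : ∃ i, i ≠ j ∧ ¬(P i = 0 ∨ P i = 3) := by
      by_contra hc
      push_neg at hc
      exact hP ⟨hj, fun i hi => by
        have := hc i hi
        exact this⟩
    obtain ⟨i, hij, hi⟩ := hex
    apply Finset.prod_eq_zero (Finset.mem_univ i)
    rw [flp_apply_ne j i x hij]
    push_neg at hi
    rcases fin4cases (P i) with h | h | h | h
    · exact absurd h hi.1
    · rw [h]; rcases fin2cases (x i) with h1 | h1 <;> rw [h1] <;> simp [P1]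
    · rw [h]; rcases fin2cases (x i) with h1 | h1 <;> rw [h1] <;> simp [P1]
    · exact absurd h hi.2
  · push_neg at hj
    apply Finset.prod_eq_zero (Finset.mem_univ j)
    rw [flp_apply_eq]
    rcases fin4cases (P j) with h | h | h | h
    · rw [h]; rcases fin2cases (x j) with h1 | h1 <;> rw [h1] <;>
        simp [P1, Matrix.one_apply]
    · exact absurd h hj.1
    · exact absurd h hj.2
    · rw [h]; rcases fin2cases (x j) with h1 | h1 <;> rw [h1] <;> simp [P1]

lemma pauli_good (j : Fin n) (P : Fin n → Fin 4) (hP : Good j P) (x : Fin n → Fin 2) :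
    Pauli P x (flp j x) =
      (if P j = 2 then -Complex.I else 1) * sgn (bOf j P) x := by
  rw [sgn_prod]
  have hκ : (if P j = 2 then -Complex.I else 1) =
      ∏ i, (if i = j then (if P j = 2 then -Complex.I else 1) else 1) := by
    rw [Finset.prod_ite_eq' Finset.univ j (fun _ => if P j = 2 then -Complex.I else 1)]
    rw [if_pos (Finset.mem_univ j)]
  rw [hκ, ← Finset.prod_mul_distrib]
  unfold Pauli
  apply Finset.prod_congr rfl
  intro i _
  by_cases hij : i = j
  · subst hij
    rw [if_pos rfl, flp_apply_eq]
    unfold bOf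
    rw [if_pos rfl]
    rcases hP.1 with h | h
    · rw [h]
      rcases fin2cases (x i) with h1 | h1 <;> rw [h1] <;> simp [P1, emap, bit]
    · rw [h]
      rcases fin2cases (x i) with h1 | h1 <;> rw [h1] <;> simp [P1, emap, bit]
  · rw [if_neg hij, flp_apply_ne j i x hij, one_mul]
    unfold bOf
    rw [if_neg hij]
    rcases hP.2 i hij with h | h
    · rw [h]
      rcases fin2cases (x i) with h1 | h1 <;> rw [h1] <;>
        simp [P1, emap, bit, Matrix.one_apply]
    · rw [h]
      rcases fin2cases (x i) with h1 | h1 <;> rw [h1] <;> simp [P1, emap, bit]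

end HW

namespace HW

variable {n k : ℕ}

lemma D1_eq (a : Fin k → Fin n → ZMod 2) :
    ((List.finRange k).map (fun l => pexp (zOfZ (a l)))).prod =
      Matrix.diagonal (fun x => ∏ l, Complex.exp (cc * sgn (a l) x)) := by
  have h1 : (fun l => pexp (zOfZ (a l))) =
      (fun l => Matrix.diagonal (fun x => Complex.exp (cc * sgn (a l) x))) := by
    funext l; exact pexp_zOfZ (a l)
  rw [h1, listProd_diagonal]
  refine congrArg Matrix.diagonal (funext fun x => ?_)
  rw [← Fin.prod_univ_def]

lemma D2_eq (a : Fin k → Fin n → ZMod 2) :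
    ((List.finRange k).map (fun l => pexpNeg (zOfZ (a l)))).prod =
      Matrix.diagonal (fun x => ∏ l, Complex.exp (-(cc * sgn (a l) x))) := by
  have h1 : (fun l => pexpNeg (zOfZ (a l))) =
      (fun l => Matrix.diagonal (fun x => Complex.exp (-(cc * sgn (a l) x)))) := by
    funext l; exact pexpNeg_zOfZ (a l)
  rw [h1, listProd_diagonal]
  refine congrArg Matrix.diagonal (funext fun x => ?_)
  rw [← Fin.prod_univ_def]

lemma trace_eq (a : Fin k → Fin n → ZMod 2) (j : Fin n) (P : Fin n → Fin 4) :
    Matrix.trace (Pauli P *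
        (((List.finRange k).map (fun l => pexp (zOfZ (a l)))).prod *
          Pauli (xAt j) *
          ((List.finRange k).map (fun l => pexpNeg (zOfZ (a l)))).prod)) =
      ∑ x : Fin n → Fin 2, Pauli P x (flp j x) *
        ((∏ l, Complex.exp (cc * sgn (a l) (flp j x))) *
          (∏ l, Complex.exp (-(cc * sgn (a l) x)))) := by
  rw [D1_eq, D2_eq, trace_ADXD]

lemma trace_good (a : Fin k → Fin n → ZMod 2) (j : Fin n) (P : Fin n → Fin 4)
    (hP : Good j P) :
    Matrix.trace (Pauli P *
        (((List.finRange k).map (fun l => pexp (zOfZ (a l)))).prod *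
          Pauli (xAt j) *
          ((List.finRange k).map (fun l => pexpNeg (zOfZ (a l)))).prod)) =
      (if P j = 2 then -Complex.I else 1) *
        ∑ S ∈ (Wset a j).powerset,
          rt2 ^ (Wset a j).card * (-Complex.I) ^ S.card *
            (if (bOf j P + ∑ l ∈ S, a l) = 0 then (2 : ℂ) ^ n else 0) := by
  rw [trace_eq]
  have step1 : ∀ x : Fin n → Fin 2,
      Pauli P x (flp j x) *
        ((∏ l, Complex.exp (cc * sgn (a l) (flp j x))) *
          (∏ l, Complex.exp (-(cc * sgn (a l) x)))) =
      ∑ S ∈ (Wset a j).powerset,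
        (if P j = 2 then -Complex.I else 1) *
          (rt2 ^ (Wset a j).card * (-Complex.I) ^ S.card *
            sgn (bOf j P + ∑ l ∈ S, a l) x) := by
    intro x
    rw [pauli_good j P hP x, F_expand a j x, Finset.mul_sum]
    apply Finset.sum_congr rfl
    intro S _
    rw [sgn_add (bOf j P) (∑ l ∈ S, a l) x]
    ring
  rw [Finset.sum_congr rfl (fun x _ => step1 x), Finset.sum_comm, Finset.mul_sum]
  apply Finset.sum_congr rfl
  intro S _
  rw [← sum_sgn (bOf j P + ∑ l ∈ S, a l)]
  rw [Finset.mul_sum, Finset.mul_sum]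

lemma bS_inj (a : Fin k → Fin n → ZMod 2) (ha : LinearIndependent (ZMod 2) a)
    {S T : Finset (Fin k)} (h : (∑ l ∈ S, a l) = ∑ l ∈ T, a l) : S = T := by
  rw [Fintype.linearIndependent_iff] at ha
  set g : Fin k → ZMod 2 :=
    fun l => (if l ∈ S then 1 else 0) + (if l ∈ T then 1 else 0) with hgdef
  have e1 : ∀ (U : Finset (Fin k)),
      ∑ l, (if l ∈ U then (1 : ZMod 2) else 0) • a l = ∑ l ∈ U, a l := by
    intro U
    rw [Finset.sum_congr rfl (fun l _ => by
      rw [ite_smul, one_smul, zero_smul] :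
        ∀ l ∈ Finset.univ, (if l ∈ U then (1 : ZMod 2) else 0) • a l
          = if l ∈ U then a l else 0)]
    rw [Finset.sum_ite_mem, Finset.univ_inter]
  have hg : ∑ l, g l • a l = 0 := by
    simp only [hgdef, add_smul]
    rw [Finset.sum_add_distrib, e1 S, e1 T, h]
    funext i
    have h2 : ∀ t : ZMod 2, t + t = 0 := by decide
    exact h2 _
  have hz := ha g hg
  ext l
  have hl := hz l
  by_cases hS : l ∈ S <;> by_cases hT : l ∈ T
  · simp [hS, hT]
  · exfalso; simp only [hgdef, hS, hT, if_true, if_false] at hl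
    exact absurd hl (by decide)
  · exfalso; simp only [hgdef, hS, hT, if_true, if_false] at hl
    exact absurd hl (by decide)
  · simp [hS, hT]

lemma add_eq_zero_iff_eq (u v : Fin n → ZMod 2) : u + v = 0 ↔ v = u := by
  constructor
  · intro h
    funext i
    have hi : u i + v i = 0 := by
      have := congrFun h i
      simpa using this
    have h2 : ∀ s t : ZMod 2, s + t = 0 → t = s := by decide
    exact h2 _ _ hi
  · intro h
    rw [h]
    funext i
    have h2 : ∀ s : ZMod 2, s + s = 0 := by decide
    simpa using h2 (u i)

end HW

namespace HW

variable {n k : ℕ}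

def pOf (j : Fin n) (b : Fin n → ZMod 2) : Fin n → Fin 4 :=
  fun i => if i = j then (if b j = 1 then 2 else 1) else (if b i = 1 then 3 else 0)

lemma zmod2cases (t : ZMod 2) : t = 0 ∨ t = 1 := by
  revert t; decide

lemma good_pOf (j : Fin n) (b : Fin n → ZMod 2) : Good j (pOf j b) := by
  constructor
  · unfold pOf
    rw [if_pos rfl]
    by_cases h : b j = 1
    · right; rw [if_pos h]
    · left; rw [if_neg h]
  · intro i hi
    unfold pOf
    rw [if_neg hi]
    by_cases h : b i = 1
    · right; rw [if_pos h]
    · left; rw [if_neg h]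

lemma bOf_pOf (j : Fin n) (b : Fin n → ZMod 2) : bOf j (pOf j b) = b := by
  funext i
  unfold bOf pOf
  by_cases hi : i = j
  · subst hi
    rw [if_pos rfl, if_pos rfl]
    rcases zmod2cases (b i) with h | h <;> rw [h] <;> simp
  · rw [if_neg hi, if_neg hi]
    rcases zmod2cases (b i) with h | h <;> rw [h] <;> simp

lemma pOf_bOf (j : Fin n) (P : Fin n → Fin 4) (hP : Good j P) : pOf j (bOf j P) = P := by
  funext i
  unfold pOf bOf
  by_cases hi : i = j
  · subst hi
    rw [if_pos rfl, if_pos rfl]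
    rcases hP.1 with h | h <;> rw [h] <;> simp
  · rw [if_neg hi, if_neg hi]
    rcases hP.2 i hi with h | h <;> rw [h] <;> simp

lemma rt2_ne_zero : rt2 ≠ 0 := by
  unfold rt2
  rw [Ne, Complex.ofReal_eq_zero]
  have : (0:ℝ) < Real.sqrt 2 / 2 := by
    have := Real.sqrt_pos.mpr (by norm_num : (0:ℝ) < 2)
    linarith
  linarith

lemma negI_ne_zero : (-Complex.I : ℂ) ≠ 0 := by
  simp [Complex.I_ne_zero]

end HW


/-- Hamming weight lemma: the Pauli expansion of
M = exp(iπZ^{a₁}/8)···exp(iπZ^{a_k}/8) X_j exp(−iπZ^{a₁}/8)···exp(−iπZ^{a_k}/8)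
has exactly 2^w nonzero coefficients, where w = #{l : a_l(j) = 1}.
The coefficient of P is (1/2^n)Tr(Pauli P · M), so nonzeroness is detected by the trace. -/
theorem hamming_weight (n k : ℕ) (a : Fin k → (Fin n → ZMod 2))
    (ha : LinearIndependent (ZMod 2) a) (j : Fin n) :
    Nat.card {P : Fin n → Fin 4 //
        Matrix.trace (Pauli P *
          (((List.finRange k).map (fun l => pexp (zOfZ (a l)))).prod *
            Pauli (xAt j) *
            ((List.finRange k).map (fun l => pexpNeg (zOfZ (a l)))).prod)) ≠ 0} =
      2 ^ Nat.card {l : Fin k // a l j = 1} := by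
  classical
  have key : (Finset.univ.filter (fun P : Fin n → Fin 4 =>
      Matrix.trace (Pauli P *
        (((List.finRange k).map (fun l => pexp (zOfZ (a l)))).prod *
          Pauli (xAt j) *
          ((List.finRange k).map (fun l => pexpNeg (zOfZ (a l)))).prod)) ≠ 0)) =
      (HW.Wset a j).powerset.image (fun S => HW.pOf j (∑ l ∈ S, a l)) := by
    ext P
    simp only [Finset.mem_filter, Finset.mem_univ, true_and, Finset.mem_image]
    constructor
    · intro hTP
      have hg : HW.Good j P := by
        by_contra hbad
        apply hTP
        rw [HW.trace_eq]
        exact Finset.sum_eq_zero fun x _ => by rw [HW.pauli_bad j P hbad x, zero_mul]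
      rw [HW.trace_good a j P hg] at hTP
      have hsum : ∑ S ∈ (HW.Wset a j).powerset,
          HW.rt2 ^ (HW.Wset a j).card * (-Complex.I) ^ S.card *
            (if (HW.bOf j P + ∑ l ∈ S, a l) = 0 then (2:ℂ)^n else 0) ≠ 0 :=
        fun h => hTP (by rw [h, mul_zero])
      obtain ⟨S, hSmem, hSne⟩ : ∃ S ∈ (HW.Wset a j).powerset,
          HW.rt2 ^ (HW.Wset a j).card * (-Complex.I) ^ S.card *
            (if (HW.bOf j P + ∑ l ∈ S, a l) = 0 then (2:ℂ)^n else 0) ≠ 0 := by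
        by_contra hall
        push_neg at hall
        exact hsum (Finset.sum_eq_zero hall)
      refine ⟨S, hSmem, ?_⟩
      have hcond : HW.bOf j P + ∑ l ∈ S, a l = 0 := by
        by_contra hc
        rw [if_neg hc, mul_zero] at hSne
        exact hSne rfl
      have hbS : (∑ l ∈ S, a l) = HW.bOf j P := (HW.add_eq_zero_iff_eq _ _).mp hcond
      rw [hbS, HW.pOf_bOf j P hg]
    · rintro ⟨S, hSmem, rfl⟩
      rw [HW.trace_good a j (HW.pOf j (∑ l ∈ S, a l)) (HW.good_pOf j _)]
      apply mul_ne_zero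
      · split <;> simp [Complex.I_ne_zero]
      · rw [Finset.sum_eq_single_of_mem S hSmem]
        · rw [HW.bOf_pOf]
          rw [if_pos (by
            funext i
            have h2 : ∀ s : ZMod 2, s + s = 0 := by decide
            simpa using h2 _)]
          exact mul_ne_zero (mul_ne_zero (pow_ne_zero _ HW.rt2_ne_zero)
            (pow_ne_zero _ HW.negI_ne_zero)) (pow_ne_zero _ two_ne_zero)
        · intro U hUmem hUne
          rw [HW.bOf_pOf]
          rw [if_neg, mul_zero]
          intro hc
          have hUS := (HW.add_eq_zero_iff_eq _ _).mp hc
          exact hUne (HW.bS_inj a ha hUS)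
  rw [Nat.card_eq_fintype_card, Nat.card_eq_fintype_card, Fintype.card_subtype,
    Fintype.card_subtype, key, Finset.card_image_of_injOn, Finset.card_powerset]
  · rfl
  · intro S hS U hU hEq
    have hSU : (∑ l ∈ S, a l) = ∑ l ∈ U, a l := by
      have h3 := congrArg (HW.bOf j) hEq
      rwa [HW.bOf_pOf, HW.bOf_pOf] at h3
    exact HW.bS_inj a ha hSU
end
end

section
/- If a_1, ..., a_k ∈ F_2^n are linearly independent bit-strings, then the product ∏_{l=1}^{k} (I + i Z^{a_l}) expands as a sum of 2^k distinct Pauli operators, each with a nonzero coefficient of absolute value 1. -/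
open Complex Matrix
noncomputable section

/-- Diagonal entries of `Pauli (zOfZ u)`. -/
def Dfun {n : ℕ} (u : Fin n → ZMod 2) : (Fin n → Fin 2) → ℂ :=
  fun x => ∏ i, (if u i = 1 ∧ x i = 1 then (-1 : ℂ) else 1)

lemma zmod2_cases : ∀ z : ZMod 2, z = 0 ∨ z = 1 := by decide

lemma fin2_cases : ∀ z : Fin 2, z = 0 ∨ z = 1 := by decide

lemma pauli_z_diag {n : ℕ} (u : Fin n → ZMod 2) :
    Pauli (zOfZ u) = Matrix.diagonal (Dfun u) := by
  ext x y
  by_cases hxy : x = y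
  · subst hxy
    simp only [Matrix.diagonal_apply_eq, Pauli, Dfun]
    refine Finset.prod_congr rfl fun i _ => ?_
    rcases zmod2_cases (u i) with h | h <;> rcases fin2_cases (x i) with h2 | h2 <;>
      simp [zOfZ, h, h2, P1, Matrix.one_apply]
  · obtain ⟨i, hi⟩ := Function.ne_iff.mp hxy
    rw [Matrix.diagonal_apply_ne _ hxy]
    refine Finset.prod_eq_zero (Finset.mem_univ i) ?_
    rcases zmod2_cases (u i) with h | h <;>
      rcases fin2_cases (x i) with hx | hx <;> rcases fin2_cases (y i) with hy | hy <;>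
      simp_all [zOfZ, P1, Matrix.one_apply]

lemma Dfun_mul {n : ℕ} (u v : Fin n → ZMod 2) :
    Dfun u * Dfun v = Dfun (u + v) := by
  funext x
  simp only [Pi.mul_apply, Dfun, ← Finset.prod_mul_distrib]
  refine Finset.prod_congr rfl fun i _ => ?_
  rcases zmod2_cases (u i) with h | h <;> rcases zmod2_cases (v i) with h' | h' <;>
    by_cases h2 : x i = 1 <;>
    simp [h, h', h2, Pi.add_apply]

lemma Dfun_zero {n : ℕ} : Dfun (0 : Fin n → ZMod 2) = 1 := by
  funext x
  simp [Dfun]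

lemma zOfZ_inj {n : ℕ} : Function.Injective (zOfZ (n := n)) := by
  intro u v h
  funext i
  have hi := congrFun h i
  simp only [zOfZ] at hi
  rcases zmod2_cases (u i) with h1 | h1 <;> rcases zmod2_cases (v i) with h2 | h2 <;>
    simp_all

/-- for linearly independent a₁,...,a_k ∈ F₂ⁿ, the product
∏_{l=1}^{k}(I + i Z^{a_l}) is a sum of 2^k distinct Pauli operators with
coefficients of absolute value 1 (up to overall normalization-free phases). -/
theorem product_expansion (n k : ℕ) (a : Fin k → (Fin n → ZMod 2))
    (ha : LinearIndependent (ZMod 2) a) :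
    ∃ (f : Finset (Fin n → Fin 4)) (c : (Fin n → Fin 4) → ℂ),
      f.card = 2 ^ k ∧ (∀ P ∈ f, ‖c P‖ = 1) ∧
      ((List.finRange k).map (fun l =>
          (1 : Matrix (Fin n → Fin 2) (Fin n → Fin 2) ℂ) + Complex.I • Pauli (zOfZ (a l)))).prod
        = ∑ P ∈ f, c P • Pauli P := by
  classical
  set g : Finset (Fin k) → (Fin n → Fin 4) := fun S => zOfZ (∑ l ∈ S, a l) with hg
  have hginj : Function.Injective g := by
    intro S T h
    have hsum : (∑ l ∈ S, a l) = ∑ l ∈ T, a l := zOfZ_inj h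
    have hli := Fintype.linearIndependent_iff.mp ha
      (fun i => (if i ∈ S then 1 else 0) - (if i ∈ T then 1 else 0)) ?_
    · ext i
      have hi := hli i
      by_cases hiS : i ∈ S <;> by_cases hiT : i ∈ T <;>
        simp_all
    · simp only [sub_smul, Finset.sum_sub_distrib, ite_smul, one_smul, zero_smul]
      rw [Finset.sum_ite_mem, Finset.sum_ite_mem, Finset.univ_inter, Finset.univ_inter,
        hsum, sub_self]
  have prodD : ∀ t : Finset (Fin k), ∏ l ∈ t, Dfun (a l) = Dfun (∑ l ∈ t, a l) := by
    intro t
    induction t using Finset.induction_on with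
    | empty => simp [Dfun_zero]
    | insert x s hnotmem ih =>
      rw [Finset.prod_insert hnotmem, Finset.sum_insert hnotmem, ih, Dfun_mul]
  refine ⟨Finset.univ.image g,
    fun P => if h : ∃ t : Finset (Fin k), g t = P then Complex.I ^ h.choose.card else 0,
    ?_, ?_, ?_⟩
  · rw [Finset.card_image_of_injective _ hginj, Finset.card_univ, Fintype.card_finset,
      Fintype.card_fin]
  · intro P hP
    obtain ⟨t, -, ht⟩ := Finset.mem_image.mp hP
    beta_reduce
    rw [dif_pos (show ∃ t' : Finset (Fin k), g t' = P from ⟨t, ht⟩)]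
    simp
  · have hdiag : ∀ l : Fin k, (1 : Matrix (Fin n → Fin 2) (Fin n → Fin 2) ℂ)
        + Complex.I • Pauli (zOfZ (a l))
        = Matrix.diagonal (Complex.I • Dfun (a l) + 1) := by
      intro l
      rw [pauli_z_diag, add_comm, ← Matrix.diagonal_smul, ← Matrix.diagonal_one,
        Matrix.diagonal_add]
      rfl
    simp only [hdiag]
    have hlist : ((List.finRange k).map (fun l =>
        Matrix.diagonal (Complex.I • Dfun (a l) + 1))).prod
        = Matrix.diagonal (((List.finRange k).map
            (fun l => Complex.I • Dfun (a l) + 1)).prod) := by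
      rw [show (fun l => Matrix.diagonal (Complex.I • Dfun (a l) + 1))
          = (Matrix.diagonalRingHom (Fin n → Fin 2) ℂ) ∘ (fun l => Complex.I • Dfun (a l) + 1)
          from rfl, ← List.map_map, ← map_list_prod]
      rfl
    rw [hlist, ← Fin.prod_univ_def, Finset.prod_add]
    have hterm : ∀ t : Finset (Fin k),
        (∏ l ∈ t, Complex.I • Dfun (a l)) * ∏ l ∈ Finset.univ \ t, (1 : (Fin n → Fin 2) → ℂ)
        = Complex.I ^ t.card • Dfun (∑ l ∈ t, a l) := by
      intro t
      rw [Finset.prod_const_one, mul_one, ← prodD]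
      funext x
      simp only [Finset.prod_apply, Pi.smul_apply, smul_eq_mul, Finset.prod_mul_distrib,
        Finset.prod_const]
    simp only [hterm]
    have hdsum : Matrix.diagonal (∑ t ∈ Finset.univ.powerset,
          Complex.I ^ t.card • Dfun (∑ l ∈ t, a l))
        = ∑ t ∈ Finset.univ.powerset,
            Complex.I ^ t.card • Matrix.diagonal (Dfun (∑ l ∈ t, a l)) := by
      rw [show (Matrix.diagonal : ((Fin n → Fin 2) → ℂ) → _)
          = (Matrix.diagonalRingHom (Fin n → Fin 2) ℂ) from rfl, map_sum]
      refine Finset.sum_congr rfl fun t _ => ?_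
      exact Matrix.diagonal_smul _ _
    rw [hdsum]
    rw [Finset.sum_image (fun x _ y _ h => hginj h)]
    rw [Finset.powerset_univ]
    refine Finset.sum_congr rfl fun t _ => ?_
    have hex : ∃ s : Finset (Fin k), g s = g t := ⟨t, rfl⟩
    rw [dif_pos hex, hginj hex.choose_spec, ← pauli_z_diag]
end
end

section
/- Let P_1,...,P_n be positive diagonal independent commuting n-qubit Pauli operators (i.e. P_k = Z^{a_k} for linearly independent bit-strings a_k ∈ F_2^n), and let C be an n-qubit Clifford unitary. If exp(iπP_1/8)···exp(iπP_n/8) = exp(iπZ_1/8)···exp(iπZ_n/8)·C up to a global phase, then {P_1,...,P_n} = {Z_1,...,Z_n} as sets and C is the identity up to a global phase. -/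
open Complex Matrix
noncomputable section

/-! ### Auxiliary definitions for the proof of `diagonal_equality`. -/

/-- The bit of `Fin 2` as an element of `ZMod 2`. -/
def bitZ : Fin 2 → ZMod 2 := fun t => if t = 1 then 1 else 0

/-- The sign character `ZMod 2 → ℤ`. -/
def chi (s : ZMod 2) : ℤ := if s = 1 then -1 else 1

/-- Indicator `ZMod 2 → ℤ`. -/
def mu1 (s : ZMod 2) : ℤ := if s = 1 then 1 else 0

/-- Inner product of a bit-string with an F₂ vector. -/
def bip {n : ℕ} (a : Fin n → ZMod 2) (x : Fin n → Fin 2) : ZMod 2 := ∑ i, a i * bitZ (x i)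

/-- Flip bit `j` of a bit string. -/
def flip2 {n : ℕ} (j : Fin n) (x : Fin n → Fin 2) : Fin n → Fin 2 :=
  Function.update x j (x j + 1)

/-- Standard basis vector in F₂ⁿ. -/
def unitv {n : ℕ} (j : Fin n) : Fin n → ZMod 2 := fun i => if i = j then 1 else 0

/-- The integer phase exponent. -/
def phiZ {n : ℕ} (a : Fin n → Fin n → ZMod 2) (x : Fin n → Fin 2) : ℤ :=
  (∑ k, chi (bip (a k) x)) - ∑ k, chi (bitZ (x k))

lemma chi_add : ∀ s t : ZMod 2, chi (s + t) = chi s * chi t := by decide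
lemma bitZ_add : ∀ s t : Fin 2, bitZ (s + t) = bitZ s + bitZ t := by decide
lemma bitZ_zero : bitZ 0 = 0 := by decide
lemma mu1_cast : ∀ s : ZMod 2, ((mu1 s : ℤ) : ZMod 2) = s := by decide
lemma zmod_sq : ∀ s : ZMod 2, s * s = s := by decide
lemma zmod_ne0 : ∀ s : ZMod 2, s ≠ 0 → s = 1 := by decide
lemma keyT : ∀ e s t : ZMod 2,
    ((chi s - chi (s + e)) + (chi t - chi (t + e))) -
      ((chi (s + t) - chi (s + t + e)) + (chi 0 - chi (0 + e)))
    = -8 * mu1 (e * (s * t)) := by decide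

lemma chi_sum {ι : Type*} (s : Finset ι) (f : ι → ZMod 2) :
    chi (∑ i ∈ s, f i) = ∏ i ∈ s, chi (f i) := by
  induction s using Finset.cons_induction with
  | empty => simp [chi]
  | cons i s hi ih => rw [Finset.prod_cons, Finset.sum_cons, chi_add, ih]

lemma bip_flip {n : ℕ} (a : Fin n → ZMod 2) (j : Fin n) (x : Fin n → Fin 2) :
    bip a (flip2 j x) = bip a x + a j := by
  have h1 : (fun i => a i * bitZ (flip2 j x i)) =
      Function.update (fun i => a i * bitZ (x i)) j (a j * (bitZ (x j) + 1)) := by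
    funext i
    rcases eq_or_ne i j with rfl | hij
    · have hb : bitZ (x i + 1) = bitZ (x i) + 1 := by
        have := bitZ_add (x i) 1; simpa [show bitZ 1 = 1 from rfl] using this
      simp [flip2, Function.update_self, hb]
    · simp [flip2, Function.update_of_ne hij]
  have h2 : bip a (flip2 j x) = ∑ i, Function.update (fun i => a i * bitZ (x i)) j
      (a j * (bitZ (x j) + 1)) i := by
    rw [bip]; exact Finset.sum_congr rfl fun i _ => congrFun h1 i
  rw [h2, Finset.sum_update_of_mem (Finset.mem_univ j), bip,
    ← Finset.add_sum_erase _ _ (Finset.mem_univ j), Finset.sdiff_singleton_eq_erase]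
  ring

lemma bip_add {n : ℕ} (a : Fin n → ZMod 2) (x y : Fin n → Fin 2) :
    bip a (fun i => x i + y i) = bip a x + bip a y := by
  simp only [bip, bitZ_add, mul_add]
  rw [Finset.sum_add_distrib]

lemma bip_zero {n : ℕ} (a : Fin n → ZMod 2) : bip a (fun _ => 0) = 0 := by
  simp [bip, bitZ_zero]

lemma bip_unitv {n : ℕ} (j : Fin n) (x : Fin n → Fin 2) : bip (unitv j) x = bitZ (x j) := by
  rw [bip]
  rw [Finset.sum_eq_single j (fun i _ hij => by simp [unitv, hij]) (by simp)]
  simp [unitv]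

lemma P1_zdiag (a : ZMod 2) (s t : Fin 2) :
    P1 (if a = 1 then 3 else 0) s t = if s = t then ((chi (a * bitZ s) : ℤ) : ℂ) else 0 := by
  have ha : a = 0 ∨ a = 1 := by revert a; decide
  rcases ha with h | h <;> subst h <;> fin_cases s <;> fin_cases t <;>
    simp [P1, chi, bitZ, Matrix.one_apply]

lemma Pauli_zOfZ {n : ℕ} (a : Fin n → ZMod 2) :
    Pauli (zOfZ a) = Matrix.diagonal (fun x => ((chi (bip a x) : ℤ) : ℂ)) := by
  ext x y
  simp only [Pauli, zOfZ, Matrix.diagonal_apply]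
  by_cases hxy : x = y
  · subst hxy
    simp only [if_pos rfl]
    rw [bip, chi_sum, Int.cast_prod]
    exact Finset.prod_congr rfl fun i _ => by rw [P1_zdiag, if_pos rfl]
  · rw [if_neg hxy]
    obtain ⟨i, hi⟩ : ∃ i, x i ≠ y i := by
      by_contra hc; push_neg at hc; exact hxy (funext hc)
    exact Finset.prod_eq_zero (Finset.mem_univ i) (by rw [P1_zdiag, if_neg hi])

lemma pexp_zOfZ {n : ℕ} (a : Fin n → ZMod 2) :
    pexp (zOfZ a) = Matrix.diagonal (fun x =>
      Complex.exp (((Real.pi / 8 * chi (bip a x) : ℝ) : ℂ) * Complex.I)) := by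
  rw [pexp, Pauli_zOfZ, ← Matrix.diagonal_smul, Matrix.exp_diagonal]
  refine congrArg _ (funext fun x => ?_)
  rw [Pi.coe_exp, Pi.smul_apply, smul_eq_mul, ← Complex.exp_eq_exp_ℂ]
  congr 1
  push_cast
  ring

lemma diag_list_prod {α : Type*} [Fintype α] [DecidableEq α] {ι : Type*} (l : List ι)
    (g : ι → α → ℂ) :
    (l.map (fun j => Matrix.diagonal (g j))).prod
      = Matrix.diagonal (fun x => (l.map (fun j => g j x)).prod) := by
  induction l with
  | nil => simp
  | cons a t ih =>
    simp only [List.map_cons, List.prod_cons, ih, Matrix.diagonal_mul_diagonal]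

lemma expProd_diag {n : ℕ} (A : Fin n → Fin n → ZMod 2) :
    expProd (fun k => zOfZ (A k)) = Matrix.diagonal (fun x =>
      Complex.exp (((Real.pi / 8 * (∑ k, chi (bip (A k) x)) : ℝ) : ℂ) * Complex.I)) := by
  rw [expProd]
  have h1 : ((List.finRange n).map fun j => pexp (zOfZ (A j)))
      = (List.finRange n).map (fun j => Matrix.diagonal (fun x =>
        Complex.exp (((Real.pi / 8 * chi (bip (A j) x) : ℝ) : ℂ) * Complex.I))) :=
    List.map_congr_left fun j _ => pexp_zOfZ (A j)
  rw [h1, diag_list_prod]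
  refine congrArg _ (funext fun x => ?_)
  rw [← Fin.prod_univ_def, ← Complex.exp_sum]
  congr 1
  rw [← Finset.sum_mul, ← Complex.ofReal_sum, ← Finset.mul_sum]
  push_cast
  ring

lemma L2 (m : Fin 4) (h0 : P1 m 0 0 ≠ 0) (u v : Fin 2) :
    P1 m u u * P1 m v v * star (P1 m (u + v) (u + v)) * star (P1 m 0 0) = 1 := by
  fin_cases m <;> fin_cases u <;> fin_cases v <;> simp_all [P1, Matrix.one_apply]

lemma L1 (m : Fin 4) (h0 : P1 m 0 1 ≠ 0) (u v : Fin 2) :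
    P1 m u (u + 1) * P1 m v (v + 1) * star (P1 m (u + v) (u + v + 1)) * star (P1 m 0 1) = 1 := by
  fin_cases m <;> fin_cases u <;> fin_cases v <;> simp_all [P1, Matrix.one_apply]

lemma star_exp_I (r : ℝ) : star (Complex.exp ((r : ℂ) * Complex.I))
    = Complex.exp (((-r : ℝ) : ℂ) * Complex.I) := by
  rw [Complex.star_def, ← Complex.exp_conj]
  congr 1
  simp [Complex.conj_I]

lemma Pauli_xAt_flip {n : ℕ} (j : Fin n) (u : Fin n → Fin 2) :
    Pauli (xAt j) u (flip2 j u) = 1 := by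
  rw [Pauli]
  apply Finset.prod_eq_one
  intro i _
  rcases eq_or_ne i j with rfl | hij
  · rw [show xAt i i = 1 from by simp [xAt], show flip2 i u i = u i + 1 from
      Function.update_self _ _ _]
    revert u; intro u
    have : ∀ t : Fin 2, P1 1 t (t + 1) = 1 := by
      intro t; fin_cases t <;> simp [P1]
    exact this (u i)
  · rw [show xAt j i = 0 from by simp [xAt, hij], show flip2 j u i = u i from
      Function.update_of_ne hij _ _]
    exact Matrix.one_apply_eq _

lemma zAt_eq_zOfZ {n : ℕ} (j : Fin n) : zAt j = zOfZ (unitv j) := by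
  funext i
  simp only [zAt, zOfZ, unitv]
  rcases eq_or_ne i j with rfl | hij
  · simp
  · simp [hij]

lemma perm_of_cond {n : ℕ} (a : Fin n → Fin n → ZMod 2)
    (ha : LinearIndependent (ZMod 2) a)
    (h : ∀ (j : Fin n) (u v : Fin n → ZMod 2),
      ∑ k, a k j * ((∑ i, a k i * u i) * (∑ i, a k i * v i)) = u j * v j) :
    ∃ σ : Equiv.Perm (Fin n), ∀ k i, a k i = if i = σ k then 1 else 0 := by
  have h1 : ∀ (j : Fin n) (u : Fin n → ZMod 2), ∑ k, a k j * (∑ i, a k i * u i) = u j := by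
    intro j u
    have h0 := h j u u
    rw [zmod_sq (u j)] at h0
    rw [← h0]
    exact Finset.sum_congr rfl fun k _ => by rw [zmod_sq]
  have hgram : ∀ k m, (∑ i, a k i * a m i) = if k = m then 1 else 0 := by
    intro k m
    have hz : ∀ k', ((∑ i, a k' i * a m i) - if k' = m then 1 else 0) = 0 := by
      apply (Fintype.linearIndependent_iff.mp ha)
      funext j
      have hs : ∀ k' : Fin n, (((∑ i, a k' i * a m i) - if k' = m then 1 else 0) • a k') j
          = (∑ i, a k' i * a m i) * a k' j - (if k' = m then 1 else 0) * a k' j := by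
        intro k'; simp [sub_mul]
      rw [Finset.sum_apply, Pi.zero_apply]
      calc ∑ k', (((∑ i, a k' i * a m i) - if k' = m then 1 else 0) • a k') j
          = (∑ k', (∑ i, a k' i * a m i) * a k' j)
              - ∑ k', (if k' = m then 1 else 0) * a k' j := by
            rw [← Finset.sum_sub_distrib]; exact Finset.sum_congr rfl fun k' _ => hs k'
        _ = a m j - a m j := by
            congr 1
            · rw [← h1 j (a m)]; exact Finset.sum_congr rfl fun k' _ => by ring
            · rw [Finset.sum_eq_single m (fun b _ hb => by rw [if_neg hb, zero_mul]) (by simp)]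
              rw [if_pos rfl, one_mul]
        _ = 0 := by ring
    exact sub_eq_zero.mp (hz k)
  have hdisj : ∀ l m, l ≠ m → ∀ j, a l j * a m j = 0 := by
    intro l m hlm j
    have h0 := h j (a l) (a m)
    rw [← h0]
    apply Finset.sum_eq_zero
    intro k _
    rcases eq_or_ne k l with rfl | hkl
    · rw [hgram k m, if_neg hlm, mul_zero, mul_zero]
    · rw [hgram k l, if_neg hkl, zero_mul, mul_zero]
  set S : Fin n → Finset (Fin n) := fun k => Finset.univ.filter (fun i => a k i ≠ 0) with hS
  have hne : ∀ k, (S k).Nonempty := by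
    intro k
    have hk : a k ≠ 0 := ha.ne_zero k
    obtain ⟨i, hi⟩ : ∃ i, a k i ≠ 0 := by
      by_contra hc; push_neg at hc; exact hk (funext hc)
    exact ⟨i, by simp [hS, hi]⟩
  have hdis : ∀ l ∈ (Finset.univ : Finset (Fin n)), ∀ m ∈ Finset.univ, l ≠ m →
      Disjoint (S l) (S m) := by
    intro l _ m _ hlm
    rw [Finset.disjoint_left]
    intro i hil him
    simp only [hS, Finset.mem_filter] at hil him
    have := hdisj l m hlm i
    rw [zmod_ne0 _ hil.2, zmod_ne0 _ him.2] at this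
    simp at this
  have hcard : ∑ k, (S k).card ≤ n := by
    rw [← Finset.card_biUnion hdis]
    simpa using Finset.card_le_univ (Finset.univ.biUnion S)
  have hcard1 : ∀ k, (S k).card = 1 := by
    by_contra hcon
    push_neg at hcon
    obtain ⟨k0, hk0⟩ := hcon
    have h2 : 2 ≤ (S k0).card := by
      have := Finset.card_pos.mpr (hne k0); omega
    have hlt : ∑ k : Fin n, 1 < ∑ k, (S k).card :=
      Finset.sum_lt_sum (fun i _ => Finset.card_pos.mpr (hne i)) ⟨k0, Finset.mem_univ _, by omega⟩
    simp at hlt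
    omega
  choose σ hσ using fun k => Finset.card_eq_one.mp (hcard1 k)
  have hval : ∀ k i, a k i = if i = σ k then 1 else 0 := by
    intro k i
    rcases eq_or_ne i (σ k) with rfl | hne'
    · rw [if_pos rfl]
      apply zmod_ne0
      have : σ k ∈ S k := by rw [hσ k]; exact Finset.mem_singleton_self _
      simpa [hS] using this
    · rw [if_neg hne']
      by_contra hc
      have : i ∈ S k := by simp [hS, hc]
      rw [hσ k, Finset.mem_singleton] at this
      exact hne' this
  have hinj : Function.Injective σ := by
    intro l m hlm
    apply ha.injective
    funext i
    rw [hval l i, hval m i, hlm]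
  exact ⟨Equiv.ofBijective σ (Finite.injective_iff_bijective.mp hinj), fun k i => by
    rw [hval k i]; rfl⟩

lemma bitZ_of : ∀ s : ZMod 2, bitZ (if s = 1 then 1 else 0) = s := by decide

lemma Gval {n : ℕ} (a : Fin n → Fin n → ZMod 2) (j : Fin n) (x y : Fin n → Fin 2) :
    (phiZ a x - phiZ a (flip2 j x)) + (phiZ a y - phiZ a (flip2 j y))
      - (phiZ a (fun i => x i + y i) - phiZ a (flip2 j (fun i => x i + y i)))
      - (phiZ a (fun _ => 0) - phiZ a (flip2 j (fun _ => 0)))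
    = -8 * ((∑ k, mu1 (a k j * (bip (a k) x * bip (a k) y)))
        - mu1 (bitZ (x j) * bitZ (y j))) := by
  have hphi : ∀ u, phiZ a u = ∑ k, (chi (bip (a k) u) - chi (bip (unitv k) u)) := by
    intro u
    rw [phiZ, ← Finset.sum_sub_distrib]
    exact Finset.sum_congr rfl fun k _ => by rw [bip_unitv]
  have hterm : ∀ b : Fin n → ZMod 2,
      ((chi (bip b x) - chi (bip b (flip2 j x))) + (chi (bip b y) - chi (bip b (flip2 j y))))
        - ((chi (bip b (fun i => x i + y i)) - chi (bip b (flip2 j (fun i => x i + y i))))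
          + (chi (bip b (fun _ => 0)) - chi (bip b (flip2 j (fun _ => 0)))))
      = -8 * mu1 (b j * (bip b x * bip b y)) := by
    intro b
    rw [bip_flip, bip_flip, bip_flip, bip_flip, bip_add, bip_zero]
    have h := keyT (b j) (bip b x) (bip b y)
    linarith
  have hsum : (phiZ a x - phiZ a (flip2 j x)) + (phiZ a y - phiZ a (flip2 j y))
      - (phiZ a (fun i => x i + y i) - phiZ a (flip2 j (fun i => x i + y i)))
      - (phiZ a (fun _ => 0) - phiZ a (flip2 j (fun _ => 0)))
      = ∑ k, ((-8) * mu1 (a k j * (bip (a k) x * bip (a k) y))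
        - (-8) * mu1 (unitv k j * (bip (unitv k) x * bip (unitv k) y))) := by
    simp only [hphi, ← Finset.sum_sub_distrib, ← Finset.sum_add_distrib]
    refine Finset.sum_congr rfl fun k _ => ?_
    have h1 := hterm (a k)
    have h2 := hterm (unitv k)
    linarith
  rw [hsum, Finset.sum_sub_distrib]
  have hu : ∑ k, (-8 : ℤ) * mu1 (unitv k j * (bip (unitv k) x * bip (unitv k) y))
      = -8 * mu1 (bitZ (x j) * bitZ (y j)) := by
    rw [Finset.sum_eq_single j (fun k _ hkj => by
      rw [show unitv k j = 0 from by simp [unitv, Ne.symm hkj], zero_mul]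
      simp [mu1]) (by simp)]
    rw [bip_unitv, bip_unitv, show unitv j j = 1 from by simp [unitv], one_mul]
  rw [hu, ← Finset.mul_sum]
  ring

lemma clifford_cond {n : ℕ} (a : Fin n → Fin n → ZMod 2)
    (C : Matrix (Fin n → Fin 2) (Fin n → Fin 2) ℂ) (hC : IsClifford C)
    (c : ℂ) (hc : ‖c‖ = 1)
    (hCd : C = Matrix.diagonal (fun u => c⁻¹ *
      Complex.exp (((Real.pi / 8 * phiZ a u : ℝ) : ℂ) * Complex.I)))
    (j : Fin n) (x y : Fin n → Fin 2) :
    ((∑ k, a k j * (bip (a k) x * bip (a k) y)) : ZMod 2) = bitZ (x j) * bitZ (y j) := by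
  classical
  set γ : (Fin n → Fin 2) → ℂ := fun u => c⁻¹ *
      Complex.exp (((Real.pi / 8 * phiZ a u : ℝ) : ℂ) * Complex.I) with hγ
  obtain ⟨w, ε, hε, hw⟩ := hC.2 (xAt j)
  have hcinv : c⁻¹ * star c⁻¹ = 1 := by
    rw [Complex.star_def, Complex.mul_conj, Complex.normSq_eq_norm_sq, norm_inv, hc]
    norm_num
  have hpair : ∀ u v' : Fin n → Fin 2, γ u * star (γ v') =
      Complex.exp (((Real.pi / 8 * phiZ a u - Real.pi / 8 * phiZ a v' : ℝ) : ℂ)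
        * Complex.I) := by
    intro u v'
    rw [hγ]
    simp only []
    rw [star_mul', star_exp_I]
    have hre : (c⁻¹ * Complex.exp (((Real.pi / 8 * phiZ a u : ℝ) : ℂ) * Complex.I)) *
        (star c⁻¹ * Complex.exp (((-(Real.pi / 8 * phiZ a v') : ℝ) : ℂ) * Complex.I))
        = (c⁻¹ * star c⁻¹) * (Complex.exp (((Real.pi / 8 * phiZ a u : ℝ) : ℂ) * Complex.I) *
          Complex.exp (((-(Real.pi / 8 * phiZ a v') : ℝ) : ℂ) * Complex.I)) := by ring
    rw [hre, hcinv, one_mul, ← Complex.exp_add]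
    congr 1
    push_cast
    ring
  have hE : ∀ u, γ u * star (γ (flip2 j u)) = ε * Pauli w u (flip2 j u) := by
    intro u
    have h1 := congrFun (congrFun hw u) (flip2 j u)
    rw [hCd, Matrix.diagonal_conjTranspose] at h1
    rw [Matrix.mul_diagonal, Matrix.diagonal_mul] at h1
    rw [Pauli_xAt_flip] at h1
    simpa [Pi.star_apply, mul_comm, mul_assoc, mul_left_comm] using h1
  have habs : ∀ u, ‖γ u‖ = 1 := by
    intro u
    rw [hγ]
    simp only []
    rw [norm_mul, norm_inv, hc, Complex.norm_exp_ofReal_mul_I]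
    norm_num
  have hPne : ∀ u, Pauli w u (flip2 j u) ≠ 0 := by
    intro u h0
    have h1 := hE u
    rw [h0, mul_zero] at h1
    rcases mul_eq_zero.mp h1 with h2 | h2
    · have := habs u; rw [h2] at this; simp at this
    · have := habs (flip2 j u); rw [star_eq_zero.mp h2] at this; simp at this
  have hq : ∀ (i : Fin n) (u : Fin n → Fin 2), P1 (w i) (u i) (flip2 j u i) ≠ 0 := by
    intro i u hi0
    exact hPne u (Finset.prod_eq_zero (Finset.mem_univ i) hi0)
  have h00 : ∀ i, i ≠ j → P1 (w i) 0 0 ≠ 0 := by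
    intro i hij
    have := hq i (fun _ => 0)
    rwa [show flip2 j (fun _ => 0) i = 0 from Function.update_of_ne hij _ _] at this
  have h01 : P1 (w j) 0 1 ≠ 0 := by
    have := hq j (fun _ => 0)
    rwa [show flip2 j (fun _ => 0) j = 1 from by
      rw [flip2, Function.update_self]; decide] at this
  have hQ : Pauli w x (flip2 j x) * Pauli w y (flip2 j y)
      * star (Pauli w (fun i => x i + y i) (flip2 j (fun i => x i + y i)))
      * star (Pauli w (fun _ => 0) (flip2 j (fun _ => 0))) = 1 := by
    rw [Pauli, Pauli, Pauli, Pauli, star_prod, star_prod, ← Finset.prod_mul_distrib,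
      ← Finset.prod_mul_distrib, ← Finset.prod_mul_distrib]
    apply Finset.prod_eq_one
    intro i _
    rcases eq_or_ne i j with rfl | hij
    · rw [show flip2 i x i = x i + 1 from Function.update_self _ _ _,
        show flip2 i y i = y i + 1 from Function.update_self _ _ _,
        show flip2 i (fun i' => x i' + y i') i = (x i + y i) + 1 from
          Function.update_self _ _ _,
        show flip2 i (fun _ => 0) i = (0 : Fin 2) + 1 from Function.update_self _ _ _,
        show ((0 : Fin 2) + 1) = 1 from by decide]
      exact L1 (w i) h01 (x i) (y i)
    · rw [show flip2 j x i = x i from Function.update_of_ne hij _ _,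
        show flip2 j y i = y i from Function.update_of_ne hij _ _,
        show flip2 j (fun i' => x i' + y i') i = x i + y i from
          Function.update_of_ne hij _ _,
        show flip2 j (fun _ => 0) i = 0 from Function.update_of_ne hij _ _]
      exact L2 (w i) (h00 i hij) (x i) (y i)
  have hQ2 : (ε * Pauli w x (flip2 j x)) * (ε * Pauli w y (flip2 j y))
      * star (ε * Pauli w (fun i => x i + y i) (flip2 j (fun i => x i + y i)))
      * star (ε * Pauli w (fun _ => 0) (flip2 j (fun _ => 0))) = 1 := by
    rcases hε with rfl | rfl
    · simpa using hQ
    · simp only [star_mul', star_neg, star_one]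
      linear_combination hQ
  have hbig : (γ x * star (γ (flip2 j x))) * (γ y * star (γ (flip2 j y)))
      * star (γ (fun i => x i + y i) * star (γ (flip2 j (fun i => x i + y i))))
      * star (γ (fun _ => 0) * star (γ (flip2 j (fun _ => 0)))) = 1 := by
    rw [hE x, hE y, hE (fun i => x i + y i), hE (fun _ => 0)]
    exact hQ2
  have hexp : Complex.exp (((Real.pi / 8 * (((phiZ a x - phiZ a (flip2 j x))
      + (phiZ a y - phiZ a (flip2 j y))
      - (phiZ a (fun i => x i + y i) - phiZ a (flip2 j (fun i => x i + y i)))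
      - (phiZ a (fun _ => 0) - phiZ a (flip2 j (fun _ => 0))) : ℤ) : ℝ) : ℝ) : ℂ)
      * Complex.I) = 1 := by
    rw [← hbig, hpair, hpair, hpair, hpair, star_exp_I, star_exp_I, ← Complex.exp_add,
      ← Complex.exp_add, ← Complex.exp_add]
    congr 1
    push_cast
    ring
  obtain ⟨m, hm⟩ := Complex.exp_eq_one_iff.mp hexp
  have h2 : ((Real.pi / 8 * (((phiZ a x - phiZ a (flip2 j x))
      + (phiZ a y - phiZ a (flip2 j y))
      - (phiZ a (fun i => x i + y i) - phiZ a (flip2 j (fun i => x i + y i)))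
      - (phiZ a (fun _ => 0) - phiZ a (flip2 j (fun _ => 0))) : ℤ) : ℝ) : ℝ) : ℂ)
      * Complex.I = (((m : ℝ) * (2 * Real.pi) : ℝ) : ℂ) * Complex.I := by
    rw [hm]; push_cast; ring
  have h3 := mul_right_cancel₀ Complex.I_ne_zero h2
  have h4 := Complex.ofReal_inj.mp h3
  have h5 : Real.pi * ((((phiZ a x - phiZ a (flip2 j x))
      + (phiZ a y - phiZ a (flip2 j y))
      - (phiZ a (fun i => x i + y i) - phiZ a (flip2 j (fun i => x i + y i)))
      - (phiZ a (fun _ => 0) - phiZ a (flip2 j (fun _ => 0))) : ℤ) : ℝ))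
      = Real.pi * (16 * (m : ℝ)) := by ring_nf; ring_nf at h4; linarith
  have h6 := mul_left_cancel₀ Real.pi_ne_zero h5
  have hG16 : (phiZ a x - phiZ a (flip2 j x)) + (phiZ a y - phiZ a (flip2 j y))
      - (phiZ a (fun i => x i + y i) - phiZ a (flip2 j (fun i => x i + y i)))
      - (phiZ a (fun _ => 0) - phiZ a (flip2 j (fun _ => 0))) = 16 * m := by
    exact_mod_cast h6
  have hGv := Gval a j x y
  have hSig : (∑ k, mu1 (a k j * (bip (a k) x * bip (a k) y)))
      = mu1 (bitZ (x j) * bitZ (y j)) - 2 * m := by linarith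
  have hcast : ((∑ k, mu1 (a k j * (bip (a k) x * bip (a k) y)) : ℤ) : ZMod 2)
      = ((mu1 (bitZ (x j) * bitZ (y j)) : ℤ) : ZMod 2) := by
    rw [hSig]
    push_cast
    have h22 : (2 : ZMod 2) = 0 := rfl
    rw [h22]
    ring
  calc (∑ k, a k j * (bip (a k) x * bip (a k) y) : ZMod 2)
      = ((∑ k, mu1 (a k j * (bip (a k) x * bip (a k) y)) : ℤ) : ZMod 2) := by
        push_cast
        exact (Finset.sum_congr rfl fun k _ => (mu1_cast _).symm)
    _ = ((mu1 (bitZ (x j) * bitZ (y j)) : ℤ) : ZMod 2) := hcast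
    _ = bitZ (x j) * bitZ (y j) := mu1_cast _

/-- diagonal equality: if Z^{a₁},...,Z^{a_n} with a_k linearly independent
satisfy exp(iπZ^{a₁}/8)···exp(iπZ^{a_n}/8) = exp(iπZ₁/8)···exp(iπZ_n/8)·C up to a global
phase with C Clifford, then {Z^{a₁},...,Z^{a_n}} = {Z₁,...,Z_n} as sets and C is the
identity up to a global phase. -/
theorem diagonal_equality (n : ℕ) (a : Fin n → (Fin n → ZMod 2))
    (ha : LinearIndependent (ZMod 2) a)
    (C : Matrix (Fin n → Fin 2) (Fin n → Fin 2) ℂ) (hC : IsClifford C)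
    (h : PhaseEq (expProd (fun k => zOfZ (a k))) (expProd (fun j : Fin n => zAt j) * C)) :
    Set.range (fun k => zOfZ (a k)) = Set.range (fun j : Fin n => zAt j) ∧
    (∃ d : ℂ, ‖d‖ = 1 ∧ C = d • (1 : Matrix (Fin n → Fin 2) (Fin n → Fin 2) ℂ)) := by
  classical
  obtain ⟨c, hc, heq⟩ := h
  have hc0 : c ≠ 0 := by
    intro h0; rw [h0] at hc; simp at hc
  rw [expProd_diag a] at heq
  have hzA : (fun j : Fin n => zAt j) = (fun j => zOfZ (unitv j)) :=
    funext fun j => zAt_eq_zOfZ j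
  rw [hzA, expProd_diag unitv] at heq
  -- extract the diagonal form of C
  have hkey : Matrix.diagonal (fun x : Fin n → Fin 2 =>
        Complex.exp (((-(Real.pi / 8 * (∑ k, chi (bip (unitv k) x))) : ℝ) : ℂ) * Complex.I))
      * Matrix.diagonal (fun x : Fin n → Fin 2 =>
        Complex.exp (((Real.pi / 8 * (∑ k, chi (bip (unitv k) x)) : ℝ) : ℂ) * Complex.I))
      = 1 := by
    rw [Matrix.diagonal_mul_diagonal]
    have : (fun x : Fin n → Fin 2 =>
        Complex.exp (((-(Real.pi / 8 * (∑ k, chi (bip (unitv k) x))) : ℝ) : ℂ) * Complex.I)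
        * Complex.exp (((Real.pi / 8 * (∑ k, chi (bip (unitv k) x)) : ℝ) : ℂ) * Complex.I))
        = fun _ => 1 := by
      funext x
      rw [← Complex.exp_add, ← Complex.exp_zero]
      congr 1
      push_cast
      ring
    rw [this]
    exact Matrix.diagonal_one
  have h7 : Matrix.diagonal (fun x : Fin n → Fin 2 =>
        Complex.exp (((-(Real.pi / 8 * (∑ k, chi (bip (unitv k) x))) : ℝ) : ℂ) * Complex.I))
      * Matrix.diagonal (fun x : Fin n → Fin 2 =>
        Complex.exp (((Real.pi / 8 * (∑ k, chi (bip (a k) x)) : ℝ) : ℂ) * Complex.I))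
      = c • C := by
    rw [heq, Matrix.mul_smul, ← Matrix.mul_assoc, hkey, Matrix.one_mul]
  have hCd : C = Matrix.diagonal (fun u : Fin n → Fin 2 => c⁻¹ *
      Complex.exp (((Real.pi / 8 * phiZ a u : ℝ) : ℂ) * Complex.I)) := by
    have h8 : c⁻¹ • (c • C) = C := by
      rw [smul_smul, inv_mul_cancel₀ hc0, one_smul]
    rw [← h8, ← h7, Matrix.diagonal_mul_diagonal, ← Matrix.diagonal_smul]
    refine congrArg _ (funext fun u => ?_)
    rw [Pi.smul_apply, smul_eq_mul, ← Complex.exp_add]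
    congr 2
    rw [phiZ]
    have hWu : (∑ k, chi (bip (unitv k) u)) = ∑ k, chi (bitZ (u k)) :=
      Finset.sum_congr rfl fun k _ => by rw [bip_unitv]
    rw [← hWu]
    push_cast
    ring
  -- the combinatorial condition
  have hFin : ∀ (j : Fin n) (u v : Fin n → ZMod 2),
      ∑ k, a k j * ((∑ i, a k i * u i) * (∑ i, a k i * v i)) = u j * v j := by
    intro j u v
    have hcc := clifford_cond a C hC c hc hCd j
      (fun i => if u i = 1 then 1 else 0) (fun i => if v i = 1 then 1 else 0)
    have hbu : ∀ b : Fin n → ZMod 2,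
        bip b (fun i => if u i = 1 then 1 else 0) = ∑ i, b i * u i :=
      fun b => Finset.sum_congr rfl fun i _ => by rw [bitZ_of]
    have hbv : ∀ b : Fin n → ZMod 2,
        bip b (fun i => if v i = 1 then 1 else 0) = ∑ i, b i * v i :=
      fun b => Finset.sum_congr rfl fun i _ => by rw [bitZ_of]
    rw [bitZ_of, bitZ_of] at hcc
    rw [← hcc]
    exact Finset.sum_congr rfl fun k _ => by rw [hbu (a k), hbv (a k)]
  obtain ⟨σ, hσ⟩ := perm_of_cond a ha hFin
  have hzz : ∀ k, zOfZ (a k) = zAt (σ k) := by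
    intro k
    funext i
    rw [zOfZ, zAt, hσ k i]
    rcases eq_or_ne i (σ k) with rfl | hne'
    · simp
    · simp [hne']
  constructor
  · have hcomp : (fun k => zOfZ (a k)) = (fun j : Fin n => zAt j) ∘ σ :=
      funext fun k => hzz k
    rw [hcomp, Function.Surjective.range_comp σ.surjective]
  · refine ⟨c⁻¹, by rw [norm_inv, hc]; norm_num, ?_⟩
    have hphi0 : ∀ x : Fin n → Fin 2, phiZ a x = 0 := by
      intro x
      rw [phiZ]
      have hb : ∀ k, bip (a k) x = bitZ (x (σ k)) := by
        intro k
        rw [bip, Finset.sum_eq_single (σ k) (fun i _ hi => by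
          rw [hσ k i, if_neg hi, zero_mul]) (by simp)]
        rw [hσ k (σ k), if_pos rfl, one_mul]
      rw [Finset.sum_congr rfl fun k _ => by rw [hb k]]
      rw [show (∑ k, chi (bitZ (x (σ k)))) = ∑ k, chi (bitZ (x k)) from
        Equiv.sum_comp σ (fun k => chi (bitZ (x k)))]
      ring
    rw [hCd]
    have : (fun u : Fin n → Fin 2 => c⁻¹ *
        Complex.exp (((Real.pi / 8 * phiZ a u : ℝ) : ℂ) * Complex.I))
        = fun _ => c⁻¹ := by
      funext u
      rw [hphi0 u]
      norm_num
    rw [this, show (fun _ : Fin n → Fin 2 => c⁻¹) = c⁻¹ • (fun _ : Fin n → Fin 2 => (1:ℂ))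
      from funext fun _ => by simp, Matrix.diagonal_smul]
    congr 1
end
end
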